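/- Let (K, v) be a Henselian valued field, n ≥ 2 an integer not divisible by the residue characteristic, and suppose K_n = K(α_n) with α_n^n = α ∈ K^× is a totally ramified extension of degree n. If n is odd, then the norm group N(K_n/K) equals K_n^{×n} ∩ K^×. -/

import Mathlib

open Polynomial Finset

section AuxNR

variable {K : Type*} [Field K] {Γ : Type*} [LinearOrderedCommGroupWithZero Γ]
  (v : Valuation K Γ)

lemma auxNR_natcast_le (m : ℕ) : v (m : K) ≤ 1 := by
  induction m with
  | zero => simp
  | succ k ih =>
    push_cast
    exact le_trans (v.map_add _ _) (max_le ih (le_of_eq v.map_one))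

lemma auxNR_cancel {a b c : Γ} (hc : c ≠ 0) (h : a * c < b * c) : a < b := by
  by_contra h'
  push_neg at h'
  exact absurd (mul_le_mul_left h' c) (not_le_of_gt h)

lemma auxNR_pow_eq_one_val {a : Γ} {m : ℕ} (hm : m ≠ 0) (h : a ^ m = 1) : a = 1 := by
  rcases lt_trichotomy a 1 with hlt | he | hgt
  · exfalso
    have h0 : a ≠ 0 := by
      intro h0; rw [h0, zero_pow hm] at h; exact zero_ne_one h
    have : a ^ m < 1 ^ m := pow_lt_pow_left₀ hlt zero_le' hm
    rw [h, one_pow] at this; exact lt_irrefl 1 this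
  · exact he
  · exfalso
    have : (1:Γ) ^ m < a ^ m := pow_lt_pow_left₀ hgt zero_le' hm
    rw [h, one_pow] at this; exact lt_irrefl 1 this

lemma auxNR_unit_iff (x : v.valuationSubring) : IsUnit x ↔ v (x : K) = 1 := by
  constructor
  · rintro ⟨u, rfl⟩
    have h1 : ((((u * u⁻¹ : (v.valuationSubring)ˣ) : v.valuationSubring)) : K) = 1 := by
      rw [mul_inv_cancel]; rfl
    have h2 : v ((u : v.valuationSubring) : K) * v (((u⁻¹ : _) : v.valuationSubring) : K) = 1 := by
      rw [← v.map_mul, ← Subring.coe_mul]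
      norm_cast at h1 ⊢
      rw [h1]; exact v.map_one
    have hu : v ((u : v.valuationSubring) : K) ≤ 1 := (u : v.valuationSubring).2
    have hui : v (((u⁻¹ : _) : v.valuationSubring) : K) ≤ 1 := ((u⁻¹ : _) : v.valuationSubring).2
    rcases lt_or_eq_of_le hu with hlt | he
    · exfalso
      have : v ((u : v.valuationSubring) : K) * v (((u⁻¹ : _) : v.valuationSubring) : K)
          ≤ v ((u : v.valuationSubring) : K) * 1 := mul_le_mul_right hui _
      rw [mul_one, h2] at this
      exact absurd (lt_of_le_of_lt this hlt) (lt_irrefl 1)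
    · exact he
  · intro hx
    have hx0 : (x : K) ≠ 0 := by
      intro h0; rw [h0, v.map_zero] at hx; exact zero_ne_one hx
    have hmem : (x : K)⁻¹ ∈ v.valuationSubring := by
      rw [Valuation.mem_valuationSubring_iff, map_inv₀, hx, inv_one]
    refine IsUnit.of_mul_eq_one ⟨(x : K)⁻¹, hmem⟩ ?_
    ext
    push_cast
    field_simp

lemma auxNR_hensel [HenselianLocalRing v.valuationSubring] (m : ℕ) (hm : v (m : K) = 1)
    (u r : K) (hu : v u ≤ 1) (hr : v r = 1) (hclose : v (u - r ^ m) < 1) :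
    ∃ s : K, s ^ m = u ∧ v (s - r) < 1 := by
  have hm0 : m ≠ 0 := by
    intro h; rw [h] at hm; simp at hm
  set O := v.valuationSubring
  have hrO : r ∈ O := by rw [Valuation.mem_valuationSubring_iff, hr]
  set uO : O := ⟨u, hu⟩
  set rO : O := ⟨r, hrO⟩
  set f : Polynomial O := X ^ m - C uO with hf
  have hmonic : f.Monic := monic_X_pow_sub_C uO hm0
  have heval : f.eval rO ∈ IsLocalRing.maximalIdeal O := by
    rw [IsLocalRing.mem_maximalIdeal, mem_nonunits_iff, auxNR_unit_iff]
    have : f.eval rO = rO ^ m - uO := by simp [hf]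
    rw [this]
    have : ((rO ^ m - uO : O) : K) = r ^ m - u := by push_cast; ring
    rw [this]
    rw [← v.map_neg] at hclose
    simp only [neg_sub] at hclose
    exact ne_of_lt hclose
  have hderiv : IsUnit (f.derivative.eval rO) := by
    rw [auxNR_unit_iff]
    have : f.derivative = C (m : O) * X ^ (m - 1) := by
      simp [hf, derivative_X_pow]
    rw [this]
    have : (((C (m : O) * X ^ (m - 1) : Polynomial O).eval rO : O) : K) = (m : K) * r ^ (m-1) := by
      push_cast [eval_mul, eval_pow, eval_C, eval_X]; ring
    rw [this, v.map_mul, hm, v.map_pow, hr, one_pow, one_mul]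
  obtain ⟨a, ha, hclose'⟩ := HenselianLocalRing.is_henselian f hmonic rO heval hderiv
  refine ⟨(a : K), ?_, ?_⟩
  · have := ha
    rw [Polynomial.IsRoot, hf] at this
    simp only [eval_sub, eval_pow, eval_X, eval_C, sub_eq_zero] at this
    have h2 : ((a ^ m : O) : K) = ((uO : O) : K) := congrArg _ this
    push_cast at h2
    exact h2
  · rw [IsLocalRing.mem_maximalIdeal, mem_nonunits_iff, auxNR_unit_iff] at hclose'
    have hle : v ((a : K) - r) ≤ 1 := by
      have : ((a - rO : O) : K) = (a : K) - r := by push_cast; ring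
      rw [← this]; exact (a - rO).2
    rcases lt_or_eq_of_le hle with h | h
    · exact h
    · exfalso
      apply hclose'
      have : ((a - rO : O) : K) = (a : K) - r := by push_cast; ring
      rw [this, h]

/-- sum of elements with pairwise distinct valuations -/
lemma auxNR_sum {ι : Type*} {s : Finset ι} {f : ι → K}
    (hd : ∀ i ∈ s, ∀ j ∈ s, f i ≠ 0 → f j ≠ 0 → v (f i) = v (f j) → i = j)
    (hne : ∃ i ∈ s, f i ≠ 0) :
    ∃ i₀ ∈ s, f i₀ ≠ 0 ∧ v (∑ j ∈ s, f j) = v (f i₀) ∧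
      ∀ j ∈ s, j ≠ i₀ → v (f j) < v (f i₀) := by
  classical
  obtain ⟨i, his, hi⟩ := hne
  have hfilter : (s.filter (fun i => f i ≠ 0)).Nonempty := ⟨i, mem_filter.2 ⟨his, hi⟩⟩
  obtain ⟨i₀, hi₀mem, hmax⟩ := Finset.exists_max_image _ (fun i => v (f i)) hfilter
  rw [mem_filter] at hi₀mem
  obtain ⟨hi₀s, hi₀ne⟩ := hi₀mem
  have hstrict : ∀ j ∈ s, j ≠ i₀ → v (f j) < v (f i₀) := by
    intro j hjs hj
    by_cases hfj : f j = 0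
    · rw [hfj, v.map_zero]
      exact zero_lt_iff.2 ((Valuation.ne_zero_iff v).2 hi₀ne)
    · have hle : v (f j) ≤ v (f i₀) := hmax j (mem_filter.2 ⟨hjs, hfj⟩)
      rcases lt_or_eq_of_le hle with h | h
      · exact h
      · exact absurd (hd j hjs i₀ hi₀s hfj hi₀ne h) hj
  refine ⟨i₀, hi₀s, hi₀ne, ?_, hstrict⟩
  have hsum : ∑ j ∈ s, f j = f i₀ + ∑ j ∈ s.erase i₀, f j := by
    rw [Finset.add_sum_erase _ _ hi₀s]
  rw [hsum]
  have hlt : v (∑ j ∈ s.erase i₀, f j) < v (f i₀) := by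
    apply v.map_sum_lt ((Valuation.ne_zero_iff v).2 hi₀ne)
    intro j hj
    rw [Finset.mem_erase] at hj
    exact hstrict j hj.2 hj.1
  rw [add_comm]
  exact v.map_add_eq_of_lt_right hlt

lemma auxNR_geom {x y : K} (hx : v x ≤ 1) (hy : v y ≤ 1) (m : ℕ) :
    v (x ^ m - y ^ m) ≤ v (x - y) := by
  rw [← geom_sum₂_mul x y m, v.map_mul]
  have hle : v (∑ i ∈ range m, x ^ i * y ^ (m - 1 - i)) ≤ 1 := by
    apply v.map_sum_le
    intro i _
    rw [v.map_mul, v.map_pow, v.map_pow]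
    calc v x ^ i * v y ^ (m - 1 - i) ≤ 1 ^ i * 1 ^ (m-1-i) := by
          exact mul_le_mul' (pow_le_pow_left' hx i) (pow_le_pow_left' hy _)
      _ = 1 := by simp
  calc v (∑ i ∈ range m, x ^ i * y ^ (m - 1 - i)) * v (x - y) ≤ 1 * v (x - y) :=
        mul_le_mul_left hle _
    _ = v (x - y) := one_mul _

lemma auxNR_pow_one {τ : K} {m : ℕ} (hm : v ((m : ℕ) : K) = 1) (h1 : τ ^ m = 1)
    (hc : v (τ - 1) < 1) : τ = 1 := by
  by_contra hne
  have hτ : v τ = 1 := by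
    have : τ = 1 + (τ - 1) := by ring
    rw [this]
    rw [add_comm]
    have := v.map_add_eq_of_lt_right (x := τ - 1) (y := 1) (by rwa [v.map_one])
    rwa [v.map_one] at this
  have hgeom : (∑ i ∈ range m, τ ^ i) * (τ - 1) = 0 := by
    rw [geom_sum_mul, h1, sub_self]
  have hτ1 : τ - 1 ≠ 0 := sub_ne_zero.2 hne
  have hsum0 : ∑ i ∈ range m, τ ^ i = 0 := by
    rcases mul_eq_zero.1 hgeom with h | h
    · exact h
    · exact absurd h hτ1
  have hkey : v (∑ i ∈ range m, τ ^ i) = 1 := by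
    have hrw : ∑ i ∈ range m, τ ^ i = ((m : ℕ) : K) + ∑ i ∈ range m, (τ ^ i - 1) := by
      rw [Finset.sum_sub_distrib]
      simp [Finset.card_range]
    rw [hrw]
    have hsmall : v (∑ i ∈ range m, (τ ^ i - 1)) < 1 := by
      apply v.map_sum_lt one_ne_zero
      intro i _
      have : τ ^ i - 1 = (∑ j ∈ range i, τ ^ j) * (τ - 1) := by rw [geom_sum_mul]
      rw [this, v.map_mul]
      have hs : v (∑ j ∈ range i, τ ^ j) ≤ 1 := by
        apply v.map_sum_le
        intro j _
        rw [v.map_pow, hτ, one_pow]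
      calc v (∑ j ∈ range i, τ ^ j) * v (τ - 1) ≤ 1 * v (τ - 1) := mul_le_mul_left hs _
        _ = v (τ - 1) := one_mul _
        _ < 1 := hc
    have := v.map_add_eq_of_lt_right (x := ∑ i ∈ range m, (τ ^ i - 1)) (y := ((m:ℕ):K))
      (by rwa [hm])
    rw [add_comm] at this
    rw [this, hm]
  rw [hsum0, v.map_zero] at hkey
  exact zero_ne_one hkey

lemma auxNR_prod_one {ι : Type*} (s : Finset ι) (f : ι → K)
    (h : ∀ i ∈ s, v (f i) < 1) : v ((∏ i ∈ s, (1 + f i)) - 1) < 1 := by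
  classical
  induction s using Finset.induction_on with
  | empty => simp
  | @insert a s' hnotmem ih =>
    rw [Finset.prod_insert hnotmem]
    have ha : v (f a) < 1 := h a (mem_insert_self a s')
    have hih : v ((∏ i ∈ s', (1 + f i)) - 1) < 1 :=
      ih (fun i hi => h i (mem_insert_of_mem hi))
    set P := ∏ i ∈ s', (1 + f i)
    have hP : v P ≤ 1 := by
      have : P = (P - 1) + 1 := by ring
      rw [this]
      exact le_trans (v.map_add _ _) (by rw [v.map_one]; exact max_le hih.le le_rfl)
    have hexp : (1 + f a) * P - 1 = (P - 1) + f a * P := by ring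
    rw [hexp]
    apply v.map_add_lt hih
    rw [v.map_mul]
    calc v (f a) * v P ≤ v (f a) * 1 := mul_le_mul_right hP _
      _ = v (f a) := mul_one _
      _ < 1 := ha

lemma auxNR_prod_lt {Γ' : Type*} [LinearOrderedCommGroupWithZero Γ'] {ι : Type*} (s : Finset ι)
    (f g : ι → Γ')
    (hle : ∀ i ∈ s, f i ≤ g i) (h0 : ∀ i ∈ s, g i ≠ 0)
    {i₀ : ι} (hi₀ : i₀ ∈ s) (hlt : f i₀ < g i₀) :
    ∏ i ∈ s, f i < ∏ i ∈ s, g i := by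
  classical
  rw [← Finset.prod_erase_mul _ _ hi₀, ← Finset.prod_erase_mul _ _ hi₀]
  have h1 : ∏ i ∈ s.erase i₀, f i ≤ ∏ i ∈ s.erase i₀, g i :=
    Finset.prod_le_prod' (fun i hi => hle i (Finset.mem_of_mem_erase hi))
  have h2 : ∏ i ∈ s.erase i₀, g i ≠ 0 :=
    Finset.prod_ne_zero_iff.2 (fun i hi => h0 i (Finset.mem_of_mem_erase hi))
  exact mul_lt_mul_of_le_of_lt_of_nonneg_of_pos h1 hlt zero_le' (zero_lt_iff.2 h2)

end AuxNR

/-- Over a Henselian valued field `(K, v)` with `n ≥ 2` odd and prime to the residue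
characteristic (`v n = 1`), if `K_n = K(α_n)` with `α_n^n = α` is totally ramified of
degree `n` over `K`, then the norm group `N(K_n/K)` equals `K_n^{×n} ∩ K^×`. -/
theorem norm_group_eq_nth_powers_of_totally_ramified
    (K L : Type*) [Field K] [Field L] [Algebra K L] [FiniteDimensional K L]
    (Γ : Type*) [LinearOrderedCommGroupWithZero Γ]
    (v : Valuation K Γ) (w : Valuation L Γ)
    [HenselianLocalRing v.valuationSubring]
    (hcomp : ∀ x : K, w (algebraMap K L x) = v x)
    (n : ℕ) (hn : 2 ≤ n) (hodd : Odd n) (hres : v (n : K) = 1)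
    (α : K) (hα : α ≠ 0) (αn : L) (hroot : αn ^ n = algebraMap K L α)
    (hgen : IntermediateField.adjoin K {αn} = ⊤)
    (hdeg : Module.finrank K L = n)
    (hram : (Subgroup.closure {x : Γˣ | ∃ k : K, k ≠ 0 ∧ v k = (x : Γ)}).relIndex
        (Subgroup.closure {x : Γˣ | ∃ y : L, y ≠ 0 ∧ w y = (x : Γ)}) = n) :
    ∀ x : K, x ≠ 0 →
      ((∃ y : L, Algebra.norm K y = x) ↔ ∃ y : L, y ^ n = algebraMap K L x) := by
  classical
  have hinj : Function.Injective (algebraMap K L) := (algebraMap K L).injective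
  have hn0 : n ≠ 0 := by omega
  -- basic facts about αn
  have hαn0 : αn ≠ 0 := by
    intro h
    rw [h, zero_pow hn0] at hroot
    exact hα (hinj (by rw [← hroot, map_zero]))
  have hwα : w αn ≠ 0 := (Valuation.ne_zero_iff w).2 hαn0
  have htn : w αn ^ n = v α := by
    rw [← w.map_pow, hroot, hcomp]
  -- the power basis
  have hint : IsIntegral K αn := IsIntegral.of_finite K αn
  obtain ⟨pb, hgen', hdim⟩ : ∃ pb : PowerBasis K L, pb.gen = αn ∧ pb.dim = n := by
    refine ⟨(IntermediateField.adjoin.powerBasis hint).map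
      ((IntermediateField.equivOfEq hgen).trans IntermediateField.topEquiv), ?_, ?_⟩
    · simp [PowerBasis.map, IntermediateField.adjoin.powerBasis]
    · have := ((IntermediateField.adjoin.powerBasis hint).map
        ((IntermediateField.equivOfEq hgen).trans IntermediateField.topEquiv)).finrank
      rw [hdeg] at this
      omega
  have halg0 : ∀ c : K, c ≠ 0 → algebraMap K L c ≠ 0 := by
    intro c hc h
    exact hc (hinj (by rw [h, map_zero]))
  have hnd : (minpoly K αn).natDegree = n := by
    rw [← hgen', pb.natDegree_minpoly, hdim]
  have hmin : minpoly K αn = X ^ n - Polynomial.C α := by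
    have hpm : (X ^ n - Polynomial.C α : Polynomial K).Monic := monic_X_pow_sub_C α hn0
    have haev : (Polynomial.aeval αn) (X ^ n - Polynomial.C α : Polynomial K) = 0 := by
      rw [map_sub, Polynomial.aeval_X_pow, Polynomial.aeval_C, hroot, sub_self]
    have hdvd : minpoly K αn ∣ (X ^ n - Polynomial.C α) := minpoly.dvd K αn haev
    obtain ⟨q, hq⟩ := hdvd
    have hq0 : q ≠ 0 := by
      intro h; rw [h, mul_zero] at hq; exact hpm.ne_zero hq
    have hmin0 : minpoly K αn ≠ 0 := minpoly.ne_zero hint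
    have hdegq : q.natDegree = 0 := by
      have := congrArg Polynomial.natDegree hq
      rw [Polynomial.natDegree_mul hmin0 hq0, natDegree_X_pow_sub_C, hnd] at this
      omega
    have hlc : q.leadingCoeff = 1 := by
      have := congrArg Polynomial.leadingCoeff hq
      rw [Polynomial.leadingCoeff_mul, (minpoly.monic hint).leadingCoeff, one_mul] at this
      rw [← this, hpm.leadingCoeff]
    have : q = 1 := by
      rw [Polynomial.eq_C_of_natDegree_eq_zero hdegq]
      rw [Polynomial.eq_C_of_natDegree_eq_zero hdegq] at hlc
      rw [Polynomial.leadingCoeff_C] at hlc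
      rw [hlc]; rfl
    rw [this, mul_one] at hq
    exact hq.symm
  have hnorm_gen : Algebra.norm K αn = α := by
    have h := Algebra.PowerBasis.norm_gen_eq_coeff_zero_minpoly pb
    rw [hgen'] at h
    rw [h, hmin, hdim]
    have hc : (X ^ n - Polynomial.C α : Polynomial K).coeff 0 = -α := by
      rw [Polynomial.coeff_sub, Polynomial.coeff_X_pow, Polynomial.coeff_C]
      simp
      omega
    rw [hc, hodd.neg_one_pow]
    ring
  -- Subgroups of values
  set HK := Subgroup.closure {x : Γˣ | ∃ k : K, k ≠ 0 ∧ v k = (x : Γ)} with hHK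
  set HL := Subgroup.closure {x : Γˣ | ∃ y : L, y ≠ 0 ∧ w y = (x : Γ)} with hHL
  have memHK : ∀ x : Γˣ, x ∈ HK → ∃ k : K, k ≠ 0 ∧ v k = (x : Γ) := by
    intro x hx
    induction hx using Subgroup.closure_induction with
    | mem z hz => exact hz
    | one => exact ⟨1, one_ne_zero, by rw [v.map_one]; rfl⟩
    | mul a b _ _ iha ihb =>
      obtain ⟨k, hk, hvk⟩ := iha
      obtain ⟨k', hk', hvk'⟩ := ihb
      exact ⟨k * k', mul_ne_zero hk hk', by rw [v.map_mul, hvk, hvk']; rfl⟩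
    | inv a _ iha =>
      obtain ⟨k, hk, hvk⟩ := iha
      exact ⟨k⁻¹, inv_ne_zero hk, by rw [map_inv₀, hvk]; exact (Units.val_inv_eq_inv_val a).symm⟩
  have memHL : ∀ x : Γˣ, x ∈ HL → ∃ y : L, y ≠ 0 ∧ w y = (x : Γ) := by
    intro x hx
    induction hx using Subgroup.closure_induction with
    | mem z hz => exact hz
    | one => exact ⟨1, one_ne_zero, by rw [w.map_one]; rfl⟩
    | mul a b _ _ iha ihb =>
      obtain ⟨y, hy, hwy⟩ := iha
      obtain ⟨y', hy', hwy'⟩ := ihb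
      exact ⟨y * y', mul_ne_zero hy hy', by rw [w.map_mul, hwy, hwy']; rfl⟩
    | inv a _ iha =>
      obtain ⟨y, hy, hwy⟩ := iha
      exact ⟨y⁻¹, inv_ne_zero hy, by rw [map_inv₀, hwy]; exact (Units.val_inv_eq_inv_val a).symm⟩
  -- a system of representatives for the n value classes
  have hYex : ∃ Q' : Finset L, Q'.card = n ∧ (1 : L) ∈ Q' ∧ (∀ y ∈ Q', y ≠ 0) ∧
      (∀ y ∈ Q', ∀ y' ∈ Q', (∃ c : K, c ≠ 0 ∧ w y = v c * w y') → y = y') := by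
    have hcard : Nat.card (HL ⧸ HK.subgroupOf HL) = n := hram
    haveI : Finite (HL ⧸ HK.subgroupOf HL) := Nat.finite_of_card_ne_zero (by omega)
    haveI : Fintype (HL ⧸ HK.subgroupOf HL) := Fintype.ofFinite _
    have inHL : ∀ (y : L) (hy : y ≠ 0),
        (Units.mk0 (w y) ((Valuation.ne_zero_iff w).2 hy)) ∈ HL := by
      intro y hy
      exact Subgroup.subset_closure ⟨y, hy, rfl⟩
    obtain ⟨cls, hcls⟩ : ∃ cls : ∀ (y : L), y ≠ 0 → (HL ⧸ HK.subgroupOf HL),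
        ∀ (y : L) (hy : y ≠ 0), cls y hy =
          QuotientGroup.mk ⟨Units.mk0 (w y) ((Valuation.ne_zero_iff w).2 hy), inHL y hy⟩ :=
      ⟨_, fun _ _ => rfl⟩
    have cls_one : ∀ h : (1 : L) ≠ 0, cls 1 h = 1 := by
      intro h
      rw [hcls]
      have h1 : (⟨Units.mk0 (w 1) ((Valuation.ne_zero_iff w).2 h), inHL 1 h⟩ :
          HL) = 1 := by
        ext
        simp
      rw [h1]
      rfl
    have cls_eq_of : ∀ (y : L) (hy : y ≠ 0) (y' : L) (hy' : y' ≠ 0),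
        (∃ c : K, c ≠ 0 ∧ w y = v c * w y') → cls y hy = cls y' hy' := by
      intro y hy y' hy' hex
      obtain ⟨c, hc, hrel⟩ := hex
      rw [hcls, hcls]
      apply (QuotientGroup.eq).2
      rw [Subgroup.mem_subgroupOf]
      have hvc : v c ≠ 0 := (Valuation.ne_zero_iff v).2 hc
      have hxy : (Units.mk0 (w y) ((Valuation.ne_zero_iff w).2 hy)) =
          (Units.mk0 (v c) hvc) * (Units.mk0 (w y') ((Valuation.ne_zero_iff w).2 hy')) := by
        ext; simpa using hrel
      have hco : (((⟨Units.mk0 (w y) ((Valuation.ne_zero_iff w).2 hy), inHL y hy⟩ : HL)⁻¹ *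
          (⟨Units.mk0 (w y') ((Valuation.ne_zero_iff w).2 hy'), inHL y' hy'⟩ : HL) : HL) : Γˣ) =
          (Units.mk0 (v c) hvc)⁻¹ := by
        push_cast
        rw [hxy, mul_inv_rev,
          mul_comm ((Units.mk0 (w y') ((Valuation.ne_zero_iff w).2 hy'))⁻¹)
            ((Units.mk0 (v c) hvc)⁻¹), mul_assoc, inv_mul_cancel, mul_one]
      rw [hco]
      exact Subgroup.inv_mem _ (Subgroup.subset_closure ⟨c, hc, rfl⟩)
    have cls_eq_to : ∀ (y : L) (hy : y ≠ 0) (y' : L) (hy' : y' ≠ 0),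
        cls y hy = cls y' hy' → (∃ c : K, c ≠ 0 ∧ w y = v c * w y') := by
      intro y hy y' hy' hq
      rw [hcls, hcls] at hq
      have hmem := (QuotientGroup.eq).1 hq
      rw [Subgroup.mem_subgroupOf] at hmem
      obtain ⟨k, hk, hvk⟩ := memHK _ hmem
      refine ⟨k⁻¹, inv_ne_zero hk, ?_⟩
      have hco : ((((⟨Units.mk0 (w y) ((Valuation.ne_zero_iff w).2 hy), inHL y hy⟩ : HL)⁻¹ *
          (⟨Units.mk0 (w y') ((Valuation.ne_zero_iff w).2 hy'), inHL y' hy'⟩ : HL) : HL) : Γˣ) : Γ)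
          = (w y)⁻¹ * w y' := by
        push_cast
        rfl
      rw [hco] at hvk
      rw [map_inv₀, hvk]
      have hwy : w y ≠ 0 := (Valuation.ne_zero_iff w).2 hy
      have hwy' : w y' ≠ 0 := (Valuation.ne_zero_iff w).2 hy'
      rw [mul_inv_rev, inv_inv, mul_comm ((w y')⁻¹) (w y), mul_assoc, inv_mul_cancel₀ hwy', mul_one]
    -- choose representatives
    obtain ⟨Y, hYdef⟩ : ∃ Y : (HL ⧸ HK.subgroupOf HL) → L,
        ∀ q, Y q = if q = 1 then 1 else Classical.choose (memHL _ (Quotient.out q).2) :=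
      ⟨_, fun _ => rfl⟩
    have hYspec : ∀ q, ∃ hy : Y q ≠ 0, cls (Y q) hy = q := by
      intro q
      by_cases hq : q = 1
      · subst hq
        have hY1 : Y (1 : HL ⧸ HK.subgroupOf HL) = 1 := by rw [hYdef]; simp
        rw [hY1]
        exact ⟨one_ne_zero, cls_one _⟩
      · have hspec := Classical.choose_spec (memHL _ (Quotient.out q).2)
        have hYq : Y q = Classical.choose (memHL _ (Quotient.out q).2) := by
          rw [hYdef]; simp [hq]
        have hy : Y q ≠ 0 := by rw [hYq]; exact hspec.1
        refine ⟨hy, ?_⟩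
        rw [hcls]
        have hel : (⟨Units.mk0 (w (Y q)) ((Valuation.ne_zero_iff w).2 hy),
            inHL (Y q) hy⟩ : HL) = Quotient.out q := by
          ext
          simp only [Units.val_mk0]
          rw [hYq]
          exact hspec.2
        rw [hel]
        exact QuotientGroup.out_eq' q
    have hYinj : Function.Injective Y := by
      intro q q' hqq
      obtain ⟨hy, hc2⟩ := hYspec q
      obtain ⟨hy', hc2'⟩ := hYspec q'
      rw [← hc2, ← hc2']
      apply cls_eq_of
      exact ⟨1, one_ne_zero, by rw [v.map_one, one_mul, hqq]⟩
    refine ⟨Finset.univ.image Y, ?_, ?_, ?_, ?_⟩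
    · rw [Finset.card_image_of_injective _ hYinj, Finset.card_univ, ← Nat.card_eq_fintype_card,
        hcard]
    · rw [Finset.mem_image]
      exact ⟨1, Finset.mem_univ _, by rw [hYdef]; simp⟩
    · intro y hy
      rw [Finset.mem_image] at hy
      obtain ⟨q, _, rfl⟩ := hy
      exact (hYspec q).choose
    · intro y hy y' hy' hSC
      rw [Finset.mem_image] at hy hy'
      obtain ⟨q, _, rfl⟩ := hy
      obtain ⟨q', _, rfl⟩ := hy'
      obtain ⟨h1, h2⟩ := hYspec q
      obtain ⟨h1', h2'⟩ := hYspec q'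
      have heq : cls (Y q) h1 = cls (Y q') h1' := cls_eq_of _ _ _ _ hSC
      rw [h2, h2'] at heq
      rw [heq]
  obtain ⟨Q', hQcard, hQone, hQne, hQdist⟩ := hYex
  -- the residue lemma : every unit is congruent to a constant
  have RESID : ∀ u : L, w u = 1 → ∃ r : K, v r = 1 ∧ w (u - algebraMap K L r) < 1 := by
    intro u hu
    haveI : Nonempty {x // x ∈ Q'} := ⟨⟨1, hQone⟩⟩
    have hcard' : Fintype.card {x // x ∈ Q'} = Module.finrank K L := by
      rw [Fintype.card_coe, hQcard, hdeg]
    have hli : LinearIndependent K (fun (q : {x // x ∈ Q'}) => (q : L)) := by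
      rw [Fintype.linearIndependent_iff]
      intro g hg
      by_contra hne
      push_neg at hne
      obtain ⟨i, hi⟩ := hne
      set f : {x // x ∈ Q'} → L := fun q => g q • (q : L) with hf
      have hd : ∀ i ∈ Finset.univ, ∀ j ∈ Finset.univ, f i ≠ 0 → f j ≠ 0 →
          w (f i) = w (f j) → i = j := by
        intro i _ j _ hfi hfj hww
        have hgi : g i ≠ 0 := by intro h; apply hfi; simp [hf, h]
        have hgj : g j ≠ 0 := by intro h; apply hfj; simp [hf, h]
        have hwi : w (f i) = v (g i) * w (i : L) := by
          simp only [hf, Algebra.smul_def, w.map_mul, hcomp]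
        have hwj : w (f j) = v (g j) * w (j : L) := by
          simp only [hf, Algebra.smul_def, w.map_mul, hcomp]
        rw [hwi, hwj] at hww
        have hvgi : v (g i) ≠ 0 := (Valuation.ne_zero_iff v).2 hgi
        have hkey : w (i : L) = v (g j / g i) * w (j : L) := by
          rw [map_div₀, div_eq_mul_inv]
          have h1 : w (i : L) = (v (g i))⁻¹ * (v (g i) * w (i : L)) :=
            (inv_mul_cancel_left₀ hvgi _).symm
          rw [h1, hww]
          rw [mul_comm (v (g j)) ((v (g i))⁻¹), mul_assoc]
        have := hQdist _ i.2 _ j.2 ⟨g j / g i, div_ne_zero hgj hgi, hkey⟩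
        exact Subtype.ext this
      have hne' : ∃ i ∈ Finset.univ, f i ≠ 0 := by
        refine ⟨i, Finset.mem_univ _, ?_⟩
        simp only [hf, smul_ne_zero_iff]
        exact ⟨hi, hQne _ i.2⟩
      obtain ⟨i₀, _, hfi₀, hsum, _⟩ := auxNR_sum w hd hne'
      rw [hg, w.map_zero] at hsum
      exact hfi₀ ((Valuation.zero_iff w).1 hsum.symm)
    set BQ := basisOfLinearIndependentOfCardEqFinrank hli hcard' with hBQ
    have hBQcoe : ∀ q, BQ q = (q : L) := by
      intro q
      rw [hBQ, coe_basisOfLinearIndependentOfCardEqFinrank]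
    set f : {x // x ∈ Q'} → L := fun q => BQ.repr u q • (q : L) with hf
    have hsumrepr : ∑ q, f q = u := by
      have := BQ.sum_repr u
      rw [← this]
      apply Finset.sum_congr rfl
      intro q _
      simp only [hf]
      rw [hBQcoe]
    have hwf : ∀ q, f q ≠ 0 → w (f q) = v (BQ.repr u q) * w (q : L) := by
      intro q _
      simp only [hf, Algebra.smul_def, w.map_mul, hcomp]
    have hd : ∀ i ∈ Finset.univ, ∀ j ∈ Finset.univ, f i ≠ 0 → f j ≠ 0 →
        w (f i) = w (f j) → i = j := by
      intro i _ j _ hfi hfj hww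
      have hgi : BQ.repr u i ≠ 0 := by intro h; apply hfi; simp [hf, h]
      have hgj : BQ.repr u j ≠ 0 := by intro h; apply hfj; simp [hf, h]
      rw [hwf i hfi, hwf j hfj] at hww
      have hvgi : v (BQ.repr u i) ≠ 0 := (Valuation.ne_zero_iff v).2 hgi
      have hkey : w (i : L) = v (BQ.repr u j / BQ.repr u i) * w (j : L) := by
        rw [map_div₀, div_eq_mul_inv]
        have h1 : w (i : L) = (v (BQ.repr u i))⁻¹ * (v (BQ.repr u i) * w (i : L)) :=
          (inv_mul_cancel_left₀ hvgi _).symm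
        rw [h1, hww]
        rw [mul_comm (v (BQ.repr u j)) ((v (BQ.repr u i))⁻¹), mul_assoc]
      exact Subtype.ext (hQdist _ i.2 _ j.2 ⟨_, div_ne_zero hgj hgi, hkey⟩)
    have hu0 : u ≠ 0 := by
      intro h; rw [h, w.map_zero] at hu; exact zero_ne_one hu
    have hne : ∃ i ∈ Finset.univ, f i ≠ 0 := by
      by_contra hall
      push_neg at hall
      have : ∑ q, f q = 0 := Finset.sum_eq_zero (fun q hq => hall q hq)
      rw [hsumrepr] at this
      exact hu0 this
    obtain ⟨q₀, _, hfq₀, hsum, hstrict⟩ := auxNR_sum w hd hne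
    rw [hsumrepr, hu] at hsum
    -- q₀ must be the class of 1
    have hrepr0 : BQ.repr u q₀ ≠ 0 := by
      intro h; apply hfq₀; simp [hf, h]
    have hq₀1 : (q₀ : L) = 1 := by
      have hvq : v (BQ.repr u q₀) ≠ 0 := (Valuation.ne_zero_iff v).2 hrepr0
      have hw1 : w ((q₀ : L)) = v ((BQ.repr u q₀)⁻¹) * w ((1 : L)) := by
        rw [map_inv₀, w.map_one, mul_one]
        have h2 := hwf q₀ hfq₀
        rw [← hsum] at h2
        exact eq_inv_of_mul_eq_one_left (by rw [mul_comm]; exact h2.symm)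
      exact hQdist _ q₀.2 _ hQone ⟨_, inv_ne_zero hrepr0, hw1⟩
    have hvr : v (BQ.repr u q₀) = 1 := by
      have := hwf q₀ hfq₀
      rw [← hsum, hq₀1, w.map_one, mul_one] at this
      exact this.symm
    refine ⟨BQ.repr u q₀, hvr, ?_⟩
    have h1 : f q₀ = algebraMap K L (BQ.repr u q₀) := by
      simp only [hf]
      rw [hq₀1, Algebra.smul_def, mul_one]
    have h2 : f q₀ + ∑ q ∈ Finset.univ.erase q₀, f q = u := by
      rw [Finset.add_sum_erase _ _ (Finset.mem_univ q₀)]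
      exact hsumrepr
    have hsub : u - algebraMap K L (BQ.repr u q₀) = ∑ q ∈ Finset.univ.erase q₀, f q := by
      rw [← h1, ← h2, add_sub_cancel_left]
    rw [hsub]
    apply w.map_sum_lt one_ne_zero
    intro j hj
    rw [Finset.mem_erase] at hj
    have h3 := hstrict j (Finset.mem_univ j) hj.1
    rwa [← hsum] at h3
  -- the order of w αn modulo values of K is exactly n
  have hexP : ∃ m : ℕ, 0 < m ∧ ∃ c : K, c ≠ 0 ∧ v c = w αn ^ m :=
    ⟨n, by omega, α, hα, htn.symm⟩
  set d := Nat.find hexP with hd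
  obtain ⟨hdpos, cd, hcd0, hcd⟩ := Nat.find_spec hexP
  have hdlen : d ≤ n := Nat.find_min' hexP ⟨by omega, α, hα, htn.symm⟩
  have hnatcast_unit : ∀ m k : ℕ, m * k = n → v ((m : ℕ) : K) = 1 := by
    intro m k hmk
    have h1 : ((n : ℕ) : K) = ((m : ℕ) : K) * ((k : ℕ) : K) := by
      rw [← hmk]; push_cast; ring
    have h2 : v ((m:ℕ) : K) * v ((k:ℕ) : K) = 1 := by
      rw [← v.map_mul, ← h1, hres]
    have hm1 : v ((m:ℕ):K) ≤ 1 := auxNR_natcast_le v m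
    have hk1 : v ((k:ℕ):K) ≤ 1 := auxNR_natcast_le v k
    rcases lt_or_eq_of_le hm1 with hlt | he
    · exfalso
      have : v ((m:ℕ):K) * v ((k:ℕ):K) ≤ v ((m:ℕ):K) * 1 := mul_le_mul_right hk1 _
      rw [mul_one, h2] at this
      exact absurd (lt_of_le_of_lt this hlt) (lt_irrefl _)
    · exact he
  have hddvd : d ∣ n := by
    by_contra hnd
    have hr : n % d ≠ 0 := fun h => hnd (Nat.dvd_of_mod_eq_zero h)
    have hrlt : n % d < d := Nat.mod_lt _ hdpos
    apply Nat.find_min hexP hrlt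
    refine ⟨Nat.pos_of_ne_zero hr, α / cd ^ (n / d), ?_, ?_⟩
    · exact div_ne_zero hα (pow_ne_zero _ hcd0)
    · rw [map_div₀, map_pow, hcd, htn.symm]
      have hsplit : n = d * (n / d) + n % d := (Nat.div_add_mod n d).symm
      rw [← pow_mul]
      have : w αn ^ n = w αn ^ (d * (n/d)) * w αn ^ (n % d) := by
        rw [← pow_add, ← hsplit]
      rw [this]
      have hpow0 : w αn ^ (d * (n/d)) ≠ 0 := pow_ne_zero _ hwα
      field_simp
      rfl
  have hdeq : d = n := by
    by_contra hdne
    have hdlt : d < n := lt_of_le_of_ne hdlen hdne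
    obtain ⟨m, hm⟩ := hddvd
    have hm1 : 1 < m := by
      rcases Nat.lt_or_ge m 2 with h | h
      · interval_cases m
        · omega
        · omega
      · omega
    have hvm : v ((m : ℕ) : K) = 1 := hnatcast_unit m d (by rw [mul_comm]; omega)
    -- u := αn^d / cd is a unit
    set u : L := αn ^ d / algebraMap K L cd with hu
    have hcdL : algebraMap K L cd ≠ 0 := halg0 cd hcd0
    have hwu : w u = 1 := by
      rw [hu, map_div₀, w.map_pow, hcomp, hcd]
      have : w αn ^ d ≠ 0 := pow_ne_zero _ hwα
      field_simp
      rfl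
    obtain ⟨r, hvr, hclose⟩ := RESID u hwu
    -- u^m lies in K
    set u0 : K := α / cd ^ m with hu0
    have hum : u ^ m = algebraMap K L u0 := by
      rw [hu, hu0, div_pow, ← pow_mul, map_div₀, map_pow]
      rw [show d * m = n from hm.symm, hroot]
    have hvu0 : v u0 = 1 := by
      have : w (algebraMap K L u0) = 1 := by
        rw [← hum, w.map_pow, hwu, one_pow]
      rwa [hcomp] at this
    have hu00 : u0 ≠ 0 := by
      intro h; rw [h, v.map_zero] at hvu0; exact zero_ne_one hvu0
    have hwr : w (algebraMap K L r) = 1 := by rw [hcomp, hvr]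
    have hvclose : v (u0 - r ^ m) < 1 := by
      have h1 : algebraMap K L (u0 - r ^ m) = u ^ m - (algebraMap K L r) ^ m := by
        rw [map_sub, map_pow, hum]
      have h2 : w (u ^ m - (algebraMap K L r) ^ m) ≤ w (u - algebraMap K L r) :=
        auxNR_geom w (le_of_eq hwu) (le_of_eq hwr) m
      calc v (u0 - r ^ m) = w (algebraMap K L (u0 - r ^ m)) := (hcomp _).symm
        _ = w (u ^ m - (algebraMap K L r) ^ m) := by rw [h1]
        _ ≤ w (u - algebraMap K L r) := h2
        _ < 1 := hclose
    obtain ⟨s, hsm, hsr⟩ := auxNR_hensel v m hvm u0 r (le_of_eq hvu0) hvr hvclose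
    have hs0 : s ≠ 0 := by
      intro h
      rw [h, zero_pow (by omega)] at hsm
      rw [← hsm] at hvu0
      rw [v.map_zero] at hvu0
      exact zero_ne_one hvu0
    have hvs : v s = 1 := by
      have : v s ^ m = 1 := by rw [← v.map_pow, hsm, hvu0]
      exact auxNR_pow_eq_one_val (by omega) this
    -- τ := u / s is an m-th root of unity congruent to 1, hence equal to 1
    set τ : L := u / algebraMap K L s with hτ
    have hsL : algebraMap K L s ≠ 0 := halg0 s hs0
    have hτm : τ ^ m = 1 := by
      rw [hτ, div_pow, hum, ← map_pow, hsm]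
      exact div_self (halg0 _ hu00)
    have hwτ : w (τ - 1) < 1 := by
      have h1 : τ - 1 = (u - algebraMap K L s) / algebraMap K L s := by
        rw [hτ]; field_simp
      rw [h1, map_div₀, hcomp, hvs, div_one]
      have h2 : u - algebraMap K L s =
          (u - algebraMap K L r) + algebraMap K L (r - s) := by
        rw [map_sub]; ring
      rw [h2]
      apply w.map_add_lt hclose
      rw [hcomp]
      have : r - s = -(s - r) := by ring
      rw [this, v.map_neg]
      exact hsr
    have hwm : w ((m : ℕ) : L) = 1 := by
      have : ((m:ℕ) : L) = algebraMap K L ((m:ℕ) : K) := by push_cast; simp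
      rw [this, hcomp, hvm]
    have hτ1 : τ = 1 := auxNR_pow_one w hwm hτm hwτ
    -- then αn^d ∈ K, contradicting the minimal polynomial degree
    have hαd : αn ^ d = algebraMap K L (cd * s) := by
      have : u = algebraMap K L s := by
        rw [← div_eq_one_iff_eq hsL, ← hτ, hτ1]
      rw [hu] at this
      rw [map_mul]
      field_simp at this ⊢
      rw [this]
    have haev : (Polynomial.aeval αn) (X ^ d - Polynomial.C (cd * s) : Polynomial K) = 0 := by
      rw [map_sub, Polynomial.aeval_X_pow, Polynomial.aeval_C, hαd, sub_self]
    have hdvd2 : minpoly K αn ∣ (X ^ d - Polynomial.C (cd * s)) := minpoly.dvd K αn haev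
    have hXd0 : (X ^ d - Polynomial.C (cd * s) : Polynomial K) ≠ 0 :=
      (monic_X_pow_sub_C _ (by omega)).ne_zero
    have := Polynomial.natDegree_le_of_dvd hdvd2 hXd0
    rw [hnd, natDegree_X_pow_sub_C] at this
    omega
  -- distinct value classes for powers of αn
  have MIN : ∀ m : ℕ, 0 < m → m < n → ∀ c : K, c ≠ 0 → v c ≠ w αn ^ m := by
    intro m hm1 hm2 c hc hvc
    have : d ≤ m := Nat.find_min' hexP ⟨hm1, c, hc, hvc⟩
    omega
  -- coordinate bound machinery
  have hwpow : ∀ j : Fin pb.dim, w (pb.basis j) = w αn ^ (j : ℕ) := by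
    intro j
    rw [pb.basis_eq_pow, hgen', w.map_pow]
  have hDIST : ∀ (g : Fin pb.dim → K), ∀ i ∈ Finset.univ, ∀ j ∈ Finset.univ,
      g i • pb.basis i ≠ 0 → g j • pb.basis j ≠ 0 →
      w (g i • pb.basis i) = w (g j • pb.basis j) → i = j := by
    have key : ∀ (g : Fin pb.dim → K) (i j : Fin pb.dim), g i ≠ 0 → g j ≠ 0 →
        v (g i) * w αn ^ (i : ℕ) = v (g j) * w αn ^ (j : ℕ) → (i : ℕ) < (j : ℕ) → False := by
      intro g i j hgi hgj hww hlt
      apply MIN ((j:ℕ) - (i:ℕ)) (by omega) (by have hj2 := lt_of_lt_of_le j.2 (le_of_eq hdim); omega)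
        (g i / g j) (div_ne_zero hgi hgj)
      have hpi : w αn ^ (i:ℕ) ≠ 0 := pow_ne_zero _ hwα
      have hvgj : v (g j) ≠ 0 := (Valuation.ne_zero_iff v).2 hgj
      have h2 : w αn ^ (j:ℕ) = w αn ^ (i:ℕ) * w αn ^ ((j:ℕ) - (i:ℕ)) := by
        rw [← pow_add]
        congr 1
        omega
      have hcancel : v (g i) = v (g j) * w αn ^ ((j:ℕ) - (i:ℕ)) := by
        apply mul_right_cancel₀ hpi
        rw [hww, h2]
        simp only [mul_comm, mul_assoc, mul_left_comm]
      rw [map_div₀, hcancel, mul_comm (v (g j)) (w αn ^ ((j:ℕ)-(i:ℕ)))]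
      exact mul_div_cancel_right₀ _ hvgj
    intro g i hi j hj hfi hfj hww
    have hgi : g i ≠ 0 := by
      intro h; apply hfi; rw [h, zero_smul]
    have hgj : g j ≠ 0 := by
      intro h; apply hfj; rw [h, zero_smul]
    have hwi : w (g i • pb.basis i) = v (g i) * w αn ^ (i : ℕ) := by
      rw [Algebra.smul_def, w.map_mul, hcomp, hwpow]
    have hwj : w (g j • pb.basis j) = v (g j) * w αn ^ (j : ℕ) := by
      rw [Algebra.smul_def, w.map_mul, hcomp, hwpow]
    rw [hwi, hwj] at hww
    by_contra hij
    rcases Ne.lt_or_gt (fun h : (i : ℕ) = (j : ℕ) => hij (Fin.ext h)) with hlt | hlt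
    · exact key g i j hgi hgj hww hlt
    · exact key g j i hgj hgi hww.symm hlt
  have hMAX : ∀ z : L, z ≠ 0 → ∃ j₀ : Fin pb.dim, pb.basis.repr z j₀ ≠ 0 ∧
      w z = v (pb.basis.repr z j₀) * w αn ^ ((j₀:ℕ)) := by
    intro z hz
    set f : Fin pb.dim → L := fun j => pb.basis.repr z j • pb.basis j with hfdef
    have hsumf : ∑ j, f j = z := pb.basis.sum_repr z
    have hne : ∃ i ∈ Finset.univ, f i ≠ 0 := by
      by_contra hall
      push_neg at hall
      exact hz (by rw [← hsumf]; exact Finset.sum_eq_zero (fun q hq => hall q hq))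
    obtain ⟨j₀, _, hfj₀, hsum, _⟩ := auxNR_sum w (hDIST _) hne
    have hrj : pb.basis.repr z j₀ ≠ 0 := by
      intro h; apply hfj₀; simp [hfdef, h]
    refine ⟨j₀, hrj, ?_⟩
    have hwz : w z = w (f j₀) := by rw [← hsumf]; exact hsum
    rw [hwz]
    simp only [hfdef, Algebra.smul_def, w.map_mul, hcomp, hwpow]
  have COORD : ∀ (z : L) (i : Fin pb.dim),
      v (pb.basis.repr z i) * w αn ^ (i : ℕ) ≤ w z := by
    intro z i
    by_cases hz : z = 0
    · subst hz
      simp only [map_zero, Finsupp.coe_zero, Pi.zero_apply, w.map_zero, zero_mul]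
      exact le_rfl
    set f : Fin pb.dim → L := fun j => pb.basis.repr z j • pb.basis j with hfdef
    have hsumf : ∑ j, f j = z := pb.basis.sum_repr z
    have hne : ∃ i ∈ Finset.univ, f i ≠ 0 := by
      by_contra hall
      push_neg at hall
      exact hz (by rw [← hsumf]; exact Finset.sum_eq_zero (fun q hq => hall q hq))
    obtain ⟨j₀, _, hfj₀, hsum, hstrict⟩ := auxNR_sum w (hDIST _) hne
    have hwfi : ∀ k : Fin pb.dim, pb.basis.repr z k ≠ 0 →
        w (f k) = v (pb.basis.repr z k) * w αn ^ ((k:ℕ)) := by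
      intro k _
      simp only [hfdef, Algebra.smul_def, w.map_mul, hcomp, hwpow]
    by_cases hri : pb.basis.repr z i = 0
    · rw [hri, v.map_zero, zero_mul]
      exact zero_le'
    have hfi : f i ≠ 0 := by
      simp only [hfdef, smul_ne_zero_iff]
      exact ⟨hri, pb.basis.ne_zero i⟩
    rw [← hwfi i hri, ← hsumf, hsum]
    by_cases hii : i = j₀
    · rw [hii]
    · exact (hstrict i (Finset.mem_univ i) hii).le
  -- decomposition of arbitrary nonzero elements
  have DECOMP : ∀ z : L, z ≠ 0 → ∃ (a : ℕ) (c : K) (u : L), c ≠ 0 ∧ w u = 1 ∧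
      z = algebraMap K L c * αn ^ a * u := by
    intro z hz
    obtain ⟨j₀, hrj, hwz⟩ := hMAX z hz
    set c := pb.basis.repr z j₀ with hc
    set a := (j₀ : ℕ) with ha
    have hcαn : algebraMap K L c * αn ^ a ≠ 0 := by
      exact mul_ne_zero (halg0 _ hrj) (pow_ne_zero _ hαn0)
    refine ⟨a, c, z / (algebraMap K L c * αn ^ a), hrj, ?_, ?_⟩
    · rw [map_div₀, w.map_mul, hcomp, w.map_pow, hwz]
      have : v c * w αn ^ a ≠ 0 :=
        mul_ne_zero ((Valuation.ne_zero_iff v).2 hrj) (pow_ne_zero _ hwα)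
      field_simp
      exact div_self ((Valuation.ne_zero_iff v).2 hrj)
    · field_simp
      exact (div_self (halg0 _ hrj)).symm
  -- norms of principal units are close to 1
  have NORM1 : ∀ ε : L, w ε < 1 → v (Algebra.norm K (1 + ε) - 1) < 1 := by
    intro ε hε
    set E := Algebra.leftMulMatrix pb.basis ε with hE
    have hME : Algebra.leftMulMatrix pb.basis (1 + ε) = 1 + E := by rw [map_add, map_one]
    have hnormdet : Algebra.norm K (1 + ε) = Matrix.det (1 + E) := by
      rw [Algebra.norm_eq_matrix_det pb.basis, hME]
    have hEntry : ∀ i j : Fin pb.dim, v (E i j) * w αn ^ (i:ℕ) ≤ w ε * w αn ^ (j:ℕ) := by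
      intro i j
      rw [hE, Algebra.leftMulMatrix_eq_repr_mul]
      calc v (pb.basis.repr (ε * pb.basis j) i) * w αn ^ (i:ℕ) ≤ w (ε * pb.basis j) :=
            COORD _ i
        _ = w ε * w αn ^ (j:ℕ) := by rw [w.map_mul, hwpow]
    have hmullt : ∀ (a p : Γ), p ≠ 0 → a < 1 → a * p < p := by
      intro a p hp ha
      have h2 := mul_lt_mul_of_le_of_lt_of_nonneg_of_pos (le_refl p) ha zero_le' (zero_lt_iff.2 hp)
      rw [mul_one] at h2
      calc a * p = p * a := mul_comm _ _
        _ < p := h2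
    have hEdiag : ∀ i, v (E i i) < 1 := by
      intro i
      have h1 : v (E i i) * w αn ^ (i:ℕ) < 1 * w αn ^ (i:ℕ) := by
        rw [one_mul]
        exact lt_of_le_of_lt (hEntry i i) (hmullt _ _ (pow_ne_zero _ hwα) hε)
      exact auxNR_cancel (pow_ne_zero _ hwα) h1
    have hPP0 : (∏ i : Fin pb.dim, w αn ^ (i:ℕ)) ≠ 0 :=
      Finset.prod_ne_zero_iff.2 (fun i _ => pow_ne_zero _ hwα)
    have hPERM : ∀ σ : Equiv.Perm (Fin pb.dim), σ ≠ 1 →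
        v (∏ i, (1 + E) (σ i) i) < 1 := by
      intro σ hσ
      have hform : v (∏ i, (1 + E) (σ i) i) * (∏ i : Fin pb.dim, w αn ^ (i:ℕ)) =
          ∏ i, (v ((1 + E) (σ i) i) * w αn ^ ((σ i : Fin pb.dim) : ℕ)) := by
        rw [Finset.prod_mul_distrib]
        congr 1
        · exact map_prod v _ _
        · exact (Equiv.prod_comp σ fun i : Fin pb.dim => w αn ^ (i : ℕ)).symm
      obtain ⟨i₀, hi₀⟩ : ∃ i, σ i ≠ i := by
        by_contra hall; push_neg at hall; exact hσ (Equiv.ext hall)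
      have hlt : ∏ i, (v ((1+E) (σ i) i) * w αn ^ ((σ i : Fin pb.dim) : ℕ)) <
          ∏ i : Fin pb.dim, w αn ^ (i:ℕ) := by
        apply auxNR_prod_lt Finset.univ _ _ ?_ (fun i _ => pow_ne_zero _ hwα)
          (Finset.mem_univ i₀) ?_
        · intro i _
          by_cases h : σ i = i
          · rw [h]
            have heq : (1 + E) i i = 1 + E i i := by
              simp [Matrix.add_apply, Matrix.one_apply_eq]
            rw [heq]
            have hle1 : v (1 + E i i) ≤ 1 :=
              le_trans (v.map_add _ _) (max_le (le_of_eq v.map_one) (hEdiag i).le)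
            calc v (1 + E i i) * w αn ^ (i:ℕ) ≤ 1 * w αn ^ (i:ℕ) :=
                  mul_le_mul_left hle1 _
              _ = w αn ^ (i:ℕ) := one_mul _
          · have hvaleq : (1 + E) (σ i) i = E (σ i) i := by
              simp [Matrix.add_apply, Matrix.one_apply_ne h]
            rw [hvaleq]
            calc v (E (σ i) i) * w αn ^ ((σ i : Fin pb.dim):ℕ) ≤ w ε * w αn ^ (i:ℕ) :=
                  hEntry (σ i) i
              _ ≤ 1 * w αn ^ (i:ℕ) := mul_le_mul_left hε.le _
              _ = w αn ^ (i:ℕ) := one_mul _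
        · have hvaleq : (1 + E) (σ i₀) i₀ = E (σ i₀) i₀ := by
            simp [Matrix.add_apply, Matrix.one_apply_ne hi₀]
          rw [hvaleq]
          calc v (E (σ i₀) i₀) * w αn ^ ((σ i₀ : Fin pb.dim):ℕ) ≤ w ε * w αn ^ (i₀:ℕ) :=
                hEntry (σ i₀) i₀
            _ < w αn ^ (i₀:ℕ) := hmullt _ _ (pow_ne_zero _ hwα) hε
      rw [← hform] at hlt
      exact auxNR_cancel hPP0 (by rw [one_mul]; exact hlt)
    have hsplit : Matrix.det (1 + E) - 1 =
        ((∏ i, (1 + E) i i) - 1) + ∑ σ ∈ Finset.univ.erase (1 : Equiv.Perm (Fin pb.dim)),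
          (Equiv.Perm.sign σ) • ∏ i, (1 + E) (σ i) i := by
      rw [Matrix.det_apply,
        ← Finset.add_sum_erase _ _ (Finset.mem_univ (1 : Equiv.Perm (Fin pb.dim)))]
      have h1 : (Equiv.Perm.sign (1 : Equiv.Perm (Fin pb.dim))) •
          ∏ i, (1+E) ((1 : Equiv.Perm (Fin pb.dim)) i) i = ∏ i, (1+E) i i := by
        simp
      rw [h1]
      ring
    rw [hnormdet, hsplit]
    apply v.map_add_lt
    · have heq : ∏ i, (1+E) i i = ∏ i, (1 + E i i) :=
        Finset.prod_congr rfl (fun i _ => by simp [Matrix.add_apply, Matrix.one_apply_eq])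
      rw [heq]
      exact auxNR_prod_one v _ _ (fun i _ => hEdiag i)
    · apply v.map_sum_lt one_ne_zero
      intro σ hσ
      rw [Finset.mem_erase] at hσ
      rcases Int.units_eq_one_or (Equiv.Perm.sign σ) with h | h
      · rw [h, one_smul]; exact hPERM σ hσ.1
      · rw [h]
        have hns : ((-1 : ℤˣ) • (∏ i, (1+E) (σ i) i) : K) = -(∏ i, (1+E) (σ i) i) := by
          rw [Units.smul_def]
          simp
        rw [hns, v.map_neg]
        exact hPERM σ hσ.1
  -- norm computations
  have hnorm_pow : ∀ a : ℕ, Algebra.norm K (αn ^ a) = α ^ a := by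
    intro a
    rw [map_pow, hnorm_gen]
  have hnorm_alg : ∀ c : K, Algebra.norm K (algebraMap K L c) = c ^ n := by
    intro c
    rw [Algebra.norm_algebraMap, hdeg]
  -- the main equivalence
  intro x hx
  constructor
  · rintro ⟨y, hy⟩
    have hy0 : y ≠ 0 := by
      rintro rfl
      rw [Algebra.norm_zero] at hy
      exact hx hy.symm
    obtain ⟨a, c, u, hc, hwu, hzy⟩ := DECOMP y hy0
    obtain ⟨r, hvr, hclose⟩ := RESID u hwu
    have hr0 : r ≠ 0 := by
      intro h; rw [h, v.map_zero] at hvr; exact zero_ne_one hvr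
    have hrL : algebraMap K L r ≠ 0 := halg0 r hr0
    set ε : L := u / algebraMap K L r - 1 with hεdef
    have hu_eq : u = algebraMap K L r * (1 + ε) := by
      rw [hεdef]
      field_simp
      ring
    have hwε : w ε < 1 := by
      have h1 : ε = (u - algebraMap K L r) / algebraMap K L r := by
        rw [hεdef]; field_simp
      rw [h1, map_div₀, hcomp, hvr, div_one]
      exact hclose
    have hN1 := NORM1 ε hwε
    have hvN : v (Algebra.norm K (1+ε)) = 1 := by
      have h1 : Algebra.norm K (1+ε) = (Algebra.norm K (1+ε) - 1) + 1 := by ring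
      rw [h1]
      have := v.map_add_eq_of_lt_right (x := Algebra.norm K (1+ε) - 1) (y := (1:K))
        (by rwa [v.map_one])
      rwa [v.map_one] at this
    obtain ⟨s, hsn, _⟩ := auxNR_hensel v n hres (Algebra.norm K (1+ε)) 1 (le_of_eq hvN)
      v.map_one (by rwa [one_pow])
    have hxval : x = c ^ n * α ^ a * r ^ n * s ^ n := by
      rw [← hy, hzy, hu_eq]
      simp only [map_mul]
      rw [hnorm_alg, hnorm_alg, hnorm_pow, ← hsn]
      ring
    refine ⟨algebraMap K L (c * r * s) * αn ^ a, ?_⟩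
    rw [mul_pow, ← map_pow, ← pow_mul, mul_comm a n, pow_mul, hroot, ← map_pow, ← map_mul,
      hxval]
    congr 1
    ring
  · rintro ⟨y, hy⟩
    have hy0 : y ≠ 0 := by
      intro h
      rw [h, zero_pow hn0] at hy
      exact hx (hinj (by rw [← hy, map_zero]))
    obtain ⟨a, c, u, hc, hwu, hzy⟩ := DECOMP y hy0
    have hcαa : c ^ n * α ^ a ≠ 0 := mul_ne_zero (pow_ne_zero _ hc) (pow_ne_zero _ hα)
    set u0 : K := x / (c ^ n * α ^ a) with hu0def
    have hum : u ^ n = algebraMap K L u0 := by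
      have h1 : y ^ n = algebraMap K L (c ^ n * α ^ a) * u ^ n := by
        rw [hzy]
        rw [mul_pow, mul_pow, ← map_pow, ← pow_mul, mul_comm a n, pow_mul, hroot, ← map_pow,
          ← map_mul]
      rw [hy] at h1
      rw [hu0def, map_div₀]
      rw [eq_div_iff (halg0 _ hcαa)]
      rw [h1]
      exact mul_comm _ _
    have hvu0 : v u0 = 1 := by
      have : w (algebraMap K L u0) = 1 := by
        rw [← hum, w.map_pow, hwu, one_pow]
      rwa [hcomp] at this
    obtain ⟨r, hvr, hclose⟩ := RESID u hwu
    have hwr : w (algebraMap K L r) = 1 := by rw [hcomp, hvr]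
    have hvclose : v (u0 - r ^ n) < 1 := by
      have h1 : algebraMap K L (u0 - r ^ n) = u ^ n - (algebraMap K L r) ^ n := by
        rw [map_sub, map_pow, hum]
      calc v (u0 - r ^ n) = w (algebraMap K L (u0 - r ^ n)) := (hcomp _).symm
        _ = w (u ^ n - (algebraMap K L r) ^ n) := by rw [h1]
        _ ≤ w (u - algebraMap K L r) := auxNR_geom w (le_of_eq hwu) (le_of_eq hwr) n
        _ < 1 := hclose
    obtain ⟨s, hsn, _⟩ := auxNR_hensel v n hres u0 r (le_of_eq hvu0) hvr hvclose
    refine ⟨αn ^ a * algebraMap K L (c * s), ?_⟩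
    rw [map_mul, hnorm_pow, hnorm_alg, mul_pow]
    have hxeq : x = c ^ n * α ^ a * u0 := by
      rw [hu0def]
      field_simp
    rw [hxeq, ← hsn]
    ring
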